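/- arXiv:2012.10113 — 2 statements merged into one kernel-verified Lean document; each statement's English description precedes it below -/
import Mathlib

section
/- Let K : ℝ → ℝ be a symmetric probability density which is nonincreasing on [0, ∞). Then for all h > 0 and all z₁, z₂ ∈ ℝ, ∫_ℝ |K((y − z₁)/h) − K((y − z₂)/h)| dy ≤ 2 · K(0) · |z₁ − z₂|. -/
open MeasureTheory

lemma kernel_le_zero_val (K : ℝ → ℝ) (hKsymm : ∀ u, K (-u) = K u)
    (hKmono : AntitoneOn K (Set.Ici 0)) : ∀ a b : ℝ, |a| ≤ |b| → K b ≤ K a := by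
  have habs : ∀ x : ℝ, K x = K |x| := by
    intro x
    rcases le_total 0 x with hx | hx
    · rw [abs_of_nonneg hx]
    · rw [abs_of_nonpos hx, ← hKsymm (-x), neg_neg]
  intro a b hab
  rw [habs a, habs b]
  exact hKmono (abs_nonneg a) (le_trans (abs_nonneg a) hab) hab

lemma kernel_setIntegral_Ico_le (K : ℝ → ℝ)
    (hKnonneg : ∀ u, 0 ≤ K u) (hKint : Integrable K)
    (hKle : ∀ x, K x ≤ K 0) (a b : ℝ) (hab : a ≤ b) :
    ∫ u in Set.Ico a b, K u ≤ K 0 * (b - a) := by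
  have h1 : ∫ u in Set.Ico a b, K u ≤ ∫ _ in Set.Ico a b, K 0 := by
    apply setIntegral_mono_on hKint.integrableOn (integrableOn_const ?_)
      measurableSet_Ico (fun x _ => hKle x)
    rw [Real.volume_Ico]
    exact ENNReal.ofReal_ne_top
  calc ∫ u in Set.Ico a b, K u ≤ ∫ _ in Set.Ico a b, K 0 := h1
    _ = (volume (Set.Ico a b)).toReal • K 0 := setIntegral_const _
    _ = K 0 * (b - a) := by
        rw [Real.volume_Ico, ENNReal.toReal_ofReal (by linarith), smul_eq_mul]
        ring

lemma kernel_shift_translate (K : ℝ → ℝ) (t a : ℝ) :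
    ∫ u in Set.Ici a, K (u - t) = ∫ u in Set.Ici (a - t), K u := by
  rw [← integral_indicator measurableSet_Ici, ← integral_indicator measurableSet_Ici,
    ← integral_sub_right_eq_self (fun x => (Set.Ici (a - t)).indicator K x) t]
  congr 1
  funext u
  simp [Set.indicator_apply, Set.mem_Ici, sub_le_sub_iff_right]

lemma kernel_shift_translate_Iio (K : ℝ → ℝ) (t a : ℝ) :
    ∫ u in Set.Iio a, K (u - t) = ∫ u in Set.Iio (a - t), K u := by
  rw [← integral_indicator measurableSet_Iio, ← integral_indicator measurableSet_Iio,
    ← integral_sub_right_eq_self (fun x => (Set.Iio (a - t)).indicator K x) t]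
  congr 1
  funext u
  simp [Set.indicator_apply, Set.mem_Iio, sub_lt_sub_iff_right]

lemma kernel_shift_key (K : ℝ → ℝ) (hKmeas : Measurable K)
    (hKnonneg : ∀ u, 0 ≤ K u) (hKint : Integrable K)
    (hKsymm : ∀ u, K (-u) = K u) (hKmono : AntitoneOn K (Set.Ici 0))
    (t : ℝ) (ht : 0 ≤ t) :
    ∫ u, |K (u - t) - K u| ≤ 2 * K 0 * t := by
  have hcmp := kernel_le_zero_val K hKsymm hKmono
  have hKle : ∀ x, K x ≤ K 0 := fun x => hcmp 0 x (by simp)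
  have hf : Integrable (fun u => K (u - t)) := hKint.comp_sub_right t
  have hsub : Integrable (fun u => K (u - t) - K u) := hf.sub hKint
  have hint : Integrable (fun u => |K (u - t) - K u|) := hsub.abs
  -- decomposition over Iio (t/2) and its complement Ici (t/2)
  have hsplit : ∫ u, |K (u - t) - K u| =
      (∫ u in Set.Iio (t/2), |K (u - t) - K u|) +
      ∫ u in Set.Ici (t/2), |K (u - t) - K u| := by
    rw [← integral_add_compl measurableSet_Iio hint, Set.compl_Iio]
  -- sign on each piece
  have hIci : ∀ u ∈ Set.Ici (t/2), |K (u - t) - K u| = K (u - t) - K u := by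
    intro u hu
    simp only [Set.mem_Ici] at hu
    refine abs_of_nonneg (sub_nonneg.2 (hcmp (u - t) u ?_))
    have hu0 : 0 ≤ u := by linarith
    rw [abs_of_nonneg hu0]
    rw [abs_le]
    constructor <;> linarith
  have hIio : ∀ u ∈ Set.Iio (t/2), |K (u - t) - K u| = K u - K (u - t) := by
    intro u hu
    simp only [Set.mem_Iio] at hu
    rw [abs_sub_comm]
    refine abs_of_nonneg (sub_nonneg.2 (hcmp u (u - t) ?_))
    have h1 : u - t ≤ 0 := by linarith
    rw [abs_of_nonpos h1, abs_le]
    constructor <;> linarith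
  have e1 : ∫ u in Set.Ici (t/2), |K (u - t) - K u|
      = (∫ u in Set.Ici (t/2), K (u - t)) - ∫ u in Set.Ici (t/2), K u := by
    rw [setIntegral_congr_fun measurableSet_Ici hIci]
    exact integral_sub hf.integrableOn hKint.integrableOn
  have e2 : ∫ u in Set.Iio (t/2), |K (u - t) - K u|
      = (∫ u in Set.Iio (t/2), K u) - ∫ u in Set.Iio (t/2), K (u - t) := by
    rw [setIntegral_congr_fun measurableSet_Iio hIio]
    exact integral_sub hKint.integrableOn hf.integrableOn
  rw [hsplit, e1, e2, kernel_shift_translate K t (t/2), kernel_shift_translate_Iio K t (t/2)]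
  have hle : -(t/2) ≤ t/2 := by linarith
  -- Ici (t/2 - t) = Ico (t/2 - t) (t/2) ∪ Ici (t/2)
  have hIciSplit : ∫ u in Set.Ici (t/2 - t), K u
      = (∫ u in Set.Ico (t/2 - t) (t/2), K u) + ∫ u in Set.Ici (t/2), K u := by
    rw [← setIntegral_union (Set.disjoint_left.2
        (fun x hx hx2 => absurd (Set.mem_Ici.1 hx2) (not_le.2 hx.2)))
      measurableSet_Ici hKint.integrableOn hKint.integrableOn,
      Set.Ico_union_Ici_eq_Ici (by linarith)]
  have hIioSplit : ∫ u in Set.Iio (t/2), K u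
      = (∫ u in Set.Iio (t/2 - t), K u) + ∫ u in Set.Ico (t/2 - t) (t/2), K u := by
    have hun : Set.Iio (t/2) = Set.Iio (t/2 - t) ∪ Set.Ico (t/2 - t) (t/2) := by
      rw [Set.Iio_union_Ico_eq_Iio (by linarith)]
    have disj : Disjoint (Set.Iio (t/2 - t)) (Set.Ico (t/2 - t) (t/2)) :=
      Set.disjoint_left.2 (fun x hx hx2 => absurd hx2.1 (not_le.2 hx))
    rw [hun]
    exact setIntegral_union disj measurableSet_Ico hKint.integrableOn hKint.integrableOn
  have hbound : ∫ u in Set.Ico (t/2 - t) (t/2), K u ≤ K 0 * t := by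
    have := kernel_setIntegral_Ico_le K hKnonneg hKint hKle (t/2 - t) (t/2) (by linarith)
    calc ∫ u in Set.Ico (t/2 - t) (t/2), K u ≤ K 0 * (t/2 - (t/2 - t)) := this
      _ = K 0 * t := by ring
  rw [hIciSplit, hIioSplit]
  have h2 : 0 ≤ K 0 := hKnonneg 0
  nlinarith [hbound]

theorem kernel_shift_l1_bound (K : ℝ → ℝ) (hKmeas : Measurable K)
    (hKnonneg : ∀ u, 0 ≤ K u) (hKint : Integrable K) (hKone : ∫ u, K u = 1)
    (hKsymm : ∀ u, K (-u) = K u) (hKmono : AntitoneOn K (Set.Ici 0)) :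
    ∀ h : ℝ, 0 < h → ∀ z₁ z₂ : ℝ,
      ∫ y, |K ((y - z₁) / h) - K ((y - z₂) / h)| ≤ 2 * K 0 * |z₁ - z₂| := by
  have main : ∀ h : ℝ, 0 < h → ∀ z₁ z₂ : ℝ, z₂ ≤ z₁ →
      ∫ y, |K ((y - z₁) / h) - K ((y - z₂) / h)| ≤ 2 * K 0 * |z₁ - z₂| := by
    intro h hh z₁ z₂ hz
    set t : ℝ := (z₁ - z₂) / h with htdef
    have ht : 0 ≤ t := div_nonneg (by linarith) hh.le
    set F : ℝ → ℝ := fun v => |K (v - t) - K v| with hF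
    have heq : ∀ y : ℝ, |K ((y - z₁) / h) - K ((y - z₂) / h)| = F ((y - z₂) / h) := by
      intro y
      have : (y - z₂) / h - t = (y - z₁) / h := by
        rw [htdef, div_sub_div_same]
        congr 1
        ring
      simp only [hF, this]
    have e1 : ∫ y, |K ((y - z₁) / h) - K ((y - z₂) / h)|
        = ∫ y, F ((y - z₂) / h) := by
      simp_rw [heq]
    have e2 : ∫ y, F ((y - z₂) / h) = ∫ y, F (y / h) := by
      have := integral_sub_right_eq_self (μ := volume) (fun y => F (y / h)) z₂
      simpa using this
    have e3 : ∫ y, F (y / h) = |h| • ∫ v, F v := Measure.integral_comp_div F h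
    have key := kernel_shift_key K hKmeas hKnonneg hKint hKsymm hKmono t ht
    rw [e1, e2, e3, abs_of_pos hh, smul_eq_mul]
    calc h * ∫ v, F v ≤ h * (2 * K 0 * t) := by
          apply mul_le_mul_of_nonneg_left key hh.le
      _ = 2 * K 0 * (z₁ - z₂) := by
          rw [htdef]
          field_simp
      _ = 2 * K 0 * |z₁ - z₂| := by rw [abs_of_nonneg (by linarith)]
  intro h hh z₁ z₂
  rcases le_total z₂ z₁ with hz | hz
  · exact main h hh z₁ z₂ hz
  · have := main h hh z₂ z₁ hz
    calc ∫ y, |K ((y - z₁) / h) - K ((y - z₂) / h)|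
        = ∫ y, |K ((y - z₂) / h) - K ((y - z₁) / h)| := by simp_rw [abs_sub_comm]
      _ ≤ 2 * K 0 * |z₂ - z₁| := this
      _ = 2 * K 0 * |z₁ - z₂| := by rw [abs_sub_comm]
end

section
/- Let K : ℝ → ℝ be a probability density with ∫ K(u)·|u|^r du < ∞, let g : ℝ → ℝ be a density that is (r, C)-Hölder continuous for some r ∈ (0,1] and C > 0, let h > 0, and let S ⊆ ℝ be a Borel set of finite Lebesgue measure λ(S). Then ∫_S |∫_ℝ (1/h)·K((y − x)/h)·g(x) dx − g(y)| dy ≤ C · λ(S) · h^r · ∫_ℝ K(u)·|u|^r du. -/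
open MeasureTheory

theorem kde_bias_bound (K g : ℝ → ℝ) (r C : ℝ) (hr0 : 0 < r) (hr1 : r ≤ 1)
    (hC : 0 < C)
    (hKmeas : Measurable K) (hKnonneg : ∀ u, 0 ≤ K u)
    (hKint : Integrable K) (hKone : ∫ u, K u = 1)
    (hKr : Integrable (fun u => K u * |u| ^ r))
    (hg_meas : Measurable g) (hg_nonneg : ∀ x, 0 ≤ g x)
    (hg_int : Integrable g) (hg_one : ∫ x, g x = 1)
    (hHolder : ∀ x y : ℝ, |g x - g y| ≤ C * |x - y| ^ r)
    (h : ℝ) (hh : 0 < h) (S : Set ℝ) (hS : MeasurableSet S)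
    (hSfin : volume S ≠ ⊤) :
    ∫ y in S, |(∫ x, (1 / h) * K ((y - x) / h) * g x) - g y| ≤
      C * (volume S).toReal * h ^ r * ∫ u, K u * |u| ^ r := by
  set I := ∫ u, K u * |u| ^ r with hIdef
  have hI0 : 0 ≤ I := integral_nonneg fun u =>
    mul_nonneg (hKnonneg u) (Real.rpow_nonneg (abs_nonneg u) r)
  have hh0 : h ≠ 0 := ne_of_gt hh
  have hhr0 : 0 ≤ h ^ r := Real.rpow_nonneg hh.le r
  have hpt : ∀ y : ℝ, |(∫ x, (1 / h) * K ((y - x) / h) * g x) - g y| ≤ C * h ^ r * I := by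
    intro y
    set F : ℝ → ℝ := fun u => K u * g (y - h * u) with hF
    have hcov : (∫ x, (1 / h) * K ((y - x) / h) * g x) = ∫ u, F u := by
      have e1 : ∀ x : ℝ, (1 / h) * K ((y - x) / h) * g x = (1 / h) * F ((y - x) / h) := by
        intro x
        simp only [hF]
        rw [mul_assoc]
        congr 2
        field_simp
        rw [sub_sub_cancel]
      simp_rw [e1]
      rw [integral_const_mul]
      have e2 : (∫ x, F ((y - x) / h)) = ∫ x, F (x / h) :=
        integral_sub_left_eq_self (fun x => F (x / h)) volume y
      rw [e2, Measure.integral_comp_div F h, abs_of_pos hh, smul_eq_mul]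
      field_simp
    have hbound : ∀ u : ℝ, ‖K u * (g (y - h * u) - g y)‖ ≤ C * h ^ r * (K u * |u| ^ r) := by
      intro u
      have h1 : |g (y - h * u) - g y| ≤ C * |y - h * u - y| ^ r := hHolder _ _
      have h2 : |y - h * u - y| = h * |u| := by
        rw [show y - h * u - y = -(h * u) by ring, abs_neg, abs_mul, abs_of_pos hh]
      rw [h2, Real.mul_rpow hh.le (abs_nonneg u)] at h1
      calc ‖K u * (g (y - h * u) - g y)‖ = K u * |g (y - h * u) - g y| := by
            rw [Real.norm_eq_abs, abs_mul, abs_of_nonneg (hKnonneg u)]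
        _ ≤ K u * (C * (h ^ r * |u| ^ r)) :=
            mul_le_mul_of_nonneg_left h1 (hKnonneg u)
        _ = C * h ^ r * (K u * |u| ^ r) := by ring
    have hdom : Integrable (fun u => C * h ^ r * (K u * |u| ^ r)) := hKr.const_mul _
    have hmeas : AEStronglyMeasurable (fun u => K u * (g (y - h * u) - g y)) volume := by
      apply (hKmeas.mul ((hg_meas.comp (measurable_const.sub
        (measurable_const.mul measurable_id))).sub measurable_const)).aestronglyMeasurable
    have hInt1 : Integrable (fun u => K u * (g (y - h * u) - g y)) :=
      hdom.mono' hmeas (Filter.Eventually.of_forall hbound)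
    have hIntF : Integrable F := by
      have := hInt1.add (hKint.mul_const (g y))
      refine this.congr (Filter.Eventually.of_forall fun u => ?_)
      simp only [hF, Pi.add_apply]
      ring
    have hsplit : (∫ u, F u) - g y = ∫ u, K u * (g (y - h * u) - g y) := by
      have : (∫ u, K u * (g (y - h * u) - g y)) = (∫ u, F u) - ∫ u, K u * g y := by
        rw [← integral_sub hIntF (hKint.mul_const (g y))]
        congr 1; ext u; simp only [hF]; ring
      rw [this, integral_mul_const, hKone]; ring
    rw [hcov, hsplit]
    calc |∫ u, K u * (g (y - h * u) - g y)| ≤ ∫ u, C * h ^ r * (K u * |u| ^ r) := by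
          rw [← Real.norm_eq_abs]
          exact norm_integral_le_of_norm_le hdom (Filter.Eventually.of_forall hbound)
      _ = C * h ^ r * I := by rw [integral_const_mul]
  have hconst : IntegrableOn (fun _ : ℝ => C * h ^ r * I) S :=
    integrableOn_const hSfin
  calc ∫ y in S, |(∫ x, (1 / h) * K ((y - x) / h) * g x) - g y|
      ≤ ∫ _y in S, C * h ^ r * I := by
        refine integral_mono_of_nonneg (Filter.Eventually.of_forall fun y => abs_nonneg _)
          hconst (Filter.Eventually.of_forall fun y => hpt y)
    _ = (volume S).toReal * (C * h ^ r * I) := by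
        rw [setIntegral_const]; simp [smul_eq_mul, Measure.real]
    _ = C * (volume S).toReal * h ^ r * I := by ring
end
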